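/- Let x and y be $-terminal strings and let k be an integer with 0 ≤ k < L. Let E_k be the event, over a random underlying function ρ, that i(x,k,ρ) < |x|, i(y,k,ρ) < |y|, and x_{i(x,k,ρ)} ≠ y_{i(y,k,ρ)}. If Pr[E_k] > 0, then: Pr[g_k(x,y,ρ) = loop | E_k] = p_a²; Pr[g_k(x,y,ρ) = delete | E_k] = p_a(1−p_a)p_r; Pr[g_k(x,y,ρ) = insert | E_k] = p_a(1−p_a)p_r; and Pr[g_k(x,y,ρ) = replace | E_k] = (1−p_a)²p_r². -/

import Mathlib

open MeasureTheory

namespace EditLSH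

/-- Hash operations: hash-insert, hash-replace, hash-match. -/
inductive HashOp | ins | rep | mat
  deriving DecidableEq

/-- Grid walk characters. -/
inductive GOp | gins | gdel | grep | gloop | gmat | gstop
  deriving DecidableEq

/-- Transformation operations. -/
inductive TOp | tins | tdel | trep
  deriving DecidableEq

/-- `p_a = √(p/(1+p))`. -/
noncomputable def pa (p : ℝ) : ℝ := Real.sqrt (p / (1 + p))

/-- `p_r = √p/(√(1+p) − √p)`. -/
noncomputable def prr (p : ℝ) : ℝ := Real.sqrt p / (Real.sqrt (1 + p) - Real.sqrt p)

/-- `L = 8d/(1−p_a) + 6 ln n`. -/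
noncomputable def Lreal (p : ℝ) (d n : ℕ) : ℝ := 8 * d / (1 - pa p) + 6 * Real.log n

/-- The number of valid hash positions: `k` is a valid position iff `(k : ℝ) < Lreal p d n`
iff `k < LN p d n`. -/
noncomputable def LN (p : ℝ) (d n : ℕ) : ℕ := ⌈Lreal p d n⌉₊

/-- An underlying function: a map from (character, hash position) pairs to pairs of reals.
Characters are `Option α`, where `none` plays the role of the special character `$`. -/
abbrev Ufun (α : Type) (p : ℝ) (d n : ℕ) : Type := (Option α × Fin (LN p d n)) → ℝ × ℝ

/-- Extend an underlying function to all of `ℕ` (positions `≥ L` are never queried). -/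
noncomputable def ext {α : Type} (p : ℝ) (d n : ℕ) (ρ : Ufun α p d n) :
    Option α × ℕ → ℝ × ℝ :=
  fun ck => if h : ck.2 < LN p d n then ρ (ck.1, ⟨ck.2, h⟩) else (1, 1)

/-- A string is `$`-terminal if its last character is `$` (i.e. `none`) and `$` occurs
nowhere else. -/
def DollarTerminal {α : Type} (x : List (Option α)) : Prop :=
  ∃ w : List α, x = w.map some ++ [none]

/-- The transcript of the hash computation: the list of operations performed by the
while loop, given the remaining input, the fuel `LN - k`, and the current output length `k`. -/
noncomputable def transcriptAux {α : Type} (pav prv : ℝ) (ρ : Option α × ℕ → ℝ × ℝ) :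
    ℕ → List (Option α) → ℕ → List HashOp
  | 0, _, _ => []
  | _ + 1, [], _ => []
  | fuel + 1, c :: rest, k =>
    if (ρ (c, k)).1 ≤ pav then HashOp.ins :: transcriptAux pav prv ρ fuel (c :: rest) (k + 1)
    else if (ρ (c, k)).2 ≤ prv then HashOp.rep :: transcriptAux pav prv ρ fuel rest (k + 1)
    else HashOp.mat :: transcriptAux pav prv ρ fuel rest (k + 1)

/-- The hash string produced by the while loop.  Output characters live in
`Option (Option α)`, with `none` playing the role of `⊥`. -/
noncomputable def hashAux {α : Type} (pav prv : ℝ) (ρ : Option α × ℕ → ℝ × ℝ) :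
    ℕ → List (Option α) → ℕ → List (Option (Option α))
  | 0, _, _ => []
  | _ + 1, [], _ => []
  | fuel + 1, c :: rest, k =>
    if (ρ (c, k)).1 ≤ pav then none :: hashAux pav prv ρ fuel (c :: rest) (k + 1)
    else if (ρ (c, k)).2 ≤ prv then none :: hashAux pav prv ρ fuel rest (k + 1)
    else some c :: hashAux pav prv ρ fuel rest (k + 1)

/-- The transcript `τ(x,ρ)`. -/
noncomputable def transcript {α : Type} (p : ℝ) (d n : ℕ) (ρ : Ufun α p d n)
    (x : List (Option α)) : List HashOp :=
  transcriptAux (pa p) (prr p) (ext p d n ρ) (LN p d n) x 0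

/-- The hash `h_ρ(x)` of an (already `$`-terminal) string `x`. -/
noncomputable def hash {α : Type} (p : ℝ) (d n : ℕ) (ρ : Ufun α p d n)
    (x : List (Option α)) : List (Option (Option α)) :=
  hashAux (pa p) (prr p) (ext p d n ρ) (LN p d n) x 0

/-- `τ(x,ρ)` is complete if `|τ(x,ρ)| < L`. -/
noncomputable def CompleteT (p : ℝ) (d n : ℕ) (τ : List HashOp) : Prop :=
  (τ.length : ℝ) < Lreal p d n

/-- The index function `i(x,k,ρ)`: the scanning index just before the `(k+1)`-st operation,
i.e. the number of non-hash-insert operations among the first `k` operations. -/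
noncomputable def idx {α : Type} (p : ℝ) (d n : ℕ) (ρ : Ufun α p d n)
    (x : List (Option α)) (k : ℕ) : ℕ :=
  ((transcript p d n ρ x).take k).countP (fun op => decide (op ≠ HashOp.ins))

/-- The `k`-th character `g_k(x,y,ρ)` of the grid walk. -/
noncomputable def gridChar {α : Type} [DecidableEq α] (p : ℝ) (d n : ℕ) (ρ : Ufun α p d n)
    (x y : List (Option α)) (k : ℕ) : GOp :=
  if k < min (transcript p d n ρ x).length (transcript p d n ρ y).length then
    if x[idx p d n ρ x k]? ≠ y[idx p d n ρ y k]? then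
      match (transcript p d n ρ x).getD k HashOp.ins, (transcript p d n ρ y).getD k HashOp.ins with
      | HashOp.rep, HashOp.rep => GOp.grep
      | HashOp.rep, HashOp.ins => GOp.gdel
      | HashOp.ins, HashOp.rep => GOp.gins
      | HashOp.ins, HashOp.ins => GOp.gloop
      | _, _ => GOp.gstop
    else
      match (transcript p d n ρ x).getD k HashOp.ins with
      | HashOp.ins => GOp.gloop
      | _ => GOp.gmat
  else GOp.gstop

/-- The grid walk `g(x,y,ρ)`: a sequence of length `max(|τ(x,ρ)|,|τ(y,ρ)|)`. -/
noncomputable def gridWalk {α : Type} [DecidableEq α] (p : ℝ) (d n : ℕ) (ρ : Ufun α p d n)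
    (x y : List (Option α)) : List GOp :=
  (List.range (max (transcript p d n ρ x).length (transcript p d n ρ y).length)).map
    (gridChar p d n ρ x y)

/-- The grid walk is alive: both transcripts are complete and no `stop` occurs. -/
noncomputable def Alive {α : Type} [DecidableEq α] (p : ℝ) (d n : ℕ) (ρ : Ufun α p d n)
    (x y : List (Option α)) : Prop :=
  CompleteT p d n (transcript p d n ρ x) ∧ CompleteT p d n (transcript p d n ρ y) ∧
    GOp.gstop ∉ gridWalk p d n ρ x y

/-- The uniform probability measure on `[0,1) × [0,1)`. -/
noncomputable def unif01 : Measure (ℝ × ℝ) :=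
  (volume.restrict (Set.Ico (0 : ℝ) 1)).prod (volume.restrict (Set.Ico (0 : ℝ) 1))

instance : SigmaFinite unif01 := by unfold unif01; infer_instance

/-- The probability measure on underlying functions: all values independent, each
coordinate uniform on `[0,1)`. -/
noncomputable def μU (α : Type) [Fintype α] (p : ℝ) (d n : ℕ) : Measure (Ufun α p d n) :=
  Measure.pi fun _ : Option α × Fin (LN p d n) => unif01

/-- Costs for the Levenshtein distance (as formerly in Mathlib's `Mathlib.Data.List.EditDistance.Defs`). -/
structure Levenshtein.Cost (α β δ : Type) where
  delete : α → δ
  insert : β → δ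
  substitute : α → β → δ

/-- The default cost: all operations cost one, substituting equal characters costs zero. -/
def Levenshtein.defaultCost {α : Type} [DecidableEq α] : Levenshtein.Cost α α ℕ where
  delete _ := 1
  insert _ := 1
  substitute a b := if a = b then 0 else 1

/-- One step of the Levenshtein dynamic program. -/
def Levenshtein.impl {α β δ : Type} [AddZeroClass δ] [Min δ] (C : Levenshtein.Cost α β δ)
    (xs : List α) (y : β) (d : {r : List δ // 0 < r.length}) : {r : List δ // 0 < r.length} :=
  let ⟨ds, w⟩ := d
  xs.zip (ds.zip ds.tail) |>.foldr
    (init := ⟨[C.insert y + ds.getLast (List.ne_nil_of_length_pos w)], by simp⟩)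
    (fun ⟨x, d₀, d₁⟩ ⟨r, w⟩ =>
      ⟨min (C.delete x + r[0]) (min (C.insert y + d₀) (C.substitute x y + d₁)) :: r, by simp⟩)

/-- Levenshtein distances of all suffixes of `xs` to `ys`. -/
def suffixLevenshtein {α β δ : Type} [AddZeroClass δ] [Min δ] (C : Levenshtein.Cost α β δ)
    (xs : List α) (ys : List β) : {r : List δ // 0 < r.length} :=
  ys.foldr
    (Levenshtein.impl C xs)
    (xs.foldr (init := ⟨[0], by simp⟩) (fun a ⟨ds, w⟩ => ⟨(C.delete a + ds[0]) :: ds, by simp⟩))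

/-- The Levenshtein distance (as formerly in Mathlib). -/
def levenshtein {α β δ : Type} [AddZeroClass δ] [Min δ] (C : Levenshtein.Cost α β δ)
    (xs : List α) (ys : List β) : δ :=
  let ⟨r, w⟩ := suffixLevenshtein C xs ys
  r[0]

/-- Edit distance: the minimum number of single-character insertions, deletions and
replacements needed to transform `x` into `y`. -/
def ED {β : Type} [DecidableEq β] (x y : List β) : ℕ :=
  levenshtein Levenshtein.defaultCost x y

/-- The smallest index at which `s` and `y` differ (`0` if `s = y`). -/
def firstDiff {β : Type} [DecidableEq β] (s y : List β) : ℕ :=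
  (((List.range (max s.length y.length + 1)).find? fun i => decide (s[i]? ≠ y[i]?)).getD 0)

/-- Apply a single transformation operation to `s`, greedily relative to `y`. -/
def applyOp {β : Type} [DecidableEq β] [Inhabited β] (y s : List β) : TOp → List β
  | TOp.tins => s.insertIdx (firstDiff s y) (y.getD (firstDiff s y) default)
  | TOp.tdel => s.eraseIdx (firstDiff s y)
  | TOp.trep => s.set (firstDiff s y) (y.getD (firstDiff s y) default)

/-- `T(x,y)`: greedily apply the transformation `T` to `x`, relative to `y`. -/
def applyT {β : Type} [DecidableEq β] [Inhabited β] (x y : List β) (T : List TOp) : List β :=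
  T.foldl (fun s op => applyOp y s op) x

/-- `T` is valid for `x` and `y`. -/
def ValidT {β : Type} (T : List TOp) (x y : List β) : Prop :=
  T.countP (fun o => decide (o = TOp.tdel ∨ o = TOp.trep)) ≤ x.length ∧
    T.countP (fun o => decide (o = TOp.tins ∨ o = TOp.trep)) ≤ y.length

/-- `T` solves `x` and `y`. -/
def Solves {β : Type} [DecidableEq β] [Inhabited β] (T : List TOp) (x y : List β) : Prop :=
  ValidT T x y ∧ applyT x y T = y ∧ ∀ i < T.length, applyT x y (T.take i) ≠ y

/-- Convert a grid walk character to a transformation operation (dropping loop/match/stop). -/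
def toTOp : GOp → Option TOp
  | GOp.gins => some TOp.tins
  | GOp.gdel => some TOp.tdel
  | GOp.grep => some TOp.trep
  | _ => none

open Classical in
/-- The transformation `𝒯(x,y,ρ)` induced by `x`, `y` and `ρ`. -/
noncomputable def inducedT {α : Type} [DecidableEq α] (p : ℝ) (d n : ℕ) (ρ : Ufun α p d n)
    (x y : List (Option α)) : List TOp :=
  if Alive p d n ρ x y then (gridWalk p d n ρ x y).filterMap toTOp else []

/-- Nodes of the graph `G(x,y)`: grid nodes `(i,j)` plus the stop node (`none`). -/
abbrev Node : Type := Option (ℕ × ℕ)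

/-- The arcs of `G(x,y)`: `stepG x y v op = some v'` iff there is an arc labelled `op`
from `v` to `v'`; `none` means no outgoing arc with that label. -/
def stepG {α : Type} [DecidableEq α] (x y : List (Option α)) : Node → GOp → Option Node
  | none, _ => some none
  | some (i, j), op =>
    if i < x.length ∧ j < y.length then
      if i < x.length - 1 ∧ j < y.length - 1 then
        if x[i]? ≠ y[j]? then
          match op with
          | GOp.gdel => some (some (i + 1, j))
          | GOp.grep => some (some (i + 1, j + 1))
          | GOp.gins => some (some (i, j + 1))
          | GOp.gloop => some (some (i, j))
          | GOp.gstop => some none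
          | GOp.gmat => none
        else
          match op with
          | GOp.gmat => some (some (i + 1, j + 1))
          | GOp.gloop => some (some (i, j))
          | _ => none
      else if i = x.length - 1 ∧ j < y.length - 1 then
        match op with
        | GOp.gins => some (some (i, j + 1))
        | GOp.gloop => some (some (i, j))
        | GOp.gdel | GOp.grep | GOp.gstop => some none
        | GOp.gmat => none
      else if i < x.length - 1 ∧ j = y.length - 1 then
        match op with
        | GOp.gdel => some (some (i + 1, j))
        | GOp.gloop => some (some (i, j))
        | GOp.gins | GOp.grep | GOp.gstop => some none
        | GOp.gmat => none
      else
        match op with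
        | GOp.gloop => some (some (i, j))
        | _ => none
    else none

/-- Follow a list of grid-walk characters through `G(x,y)` starting at node `v`;
returns `none` if at some step the required arc does not exist. -/
def walkFrom {α : Type} [DecidableEq α] (x y : List (Option α)) : Node → List GOp → Option Node
  | v, [] => some v
  | v, op :: rest =>
    match stepG x y v op with
    | none => none
    | some v' => walkFrom x y v' rest

lemma pa_nonneg (p : ℝ) : 0 ≤ pa p := Real.sqrt_nonneg _

lemma pa_lt_one {p : ℝ} (hp0 : 0 < p) : pa p < 1 := by
  rw [pa]
  have : p / (1 + p) < 1 := by rw [div_lt_one (by linarith)]; linarith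
  calc Real.sqrt (p / (1+p)) < Real.sqrt 1 := Real.sqrt_lt_sqrt (by positivity) this
    _ = 1 := Real.sqrt_one

lemma sqrt_sub_pos {p : ℝ} (hp0 : 0 < p) : 0 < Real.sqrt (1 + p) - Real.sqrt p := by
  have := Real.sqrt_lt_sqrt (le_of_lt hp0) (by linarith : p < 1 + p)
  linarith

lemma prr_pos {p : ℝ} (hp0 : 0 < p) : 0 < prr p :=
  div_pos (Real.sqrt_pos.mpr hp0) (sqrt_sub_pos hp0)

lemma prr_le_one {p : ℝ} (hp0 : 0 < p) (hp : p ≤ 1 / 3) : prr p ≤ 1 := by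
  rw [prr, div_le_one (sqrt_sub_pos hp0)]
  have h4 : Real.sqrt (4 * p) ≤ Real.sqrt (1 + p) := Real.sqrt_le_sqrt (by linarith)
  have : Real.sqrt (4 * p) = 2 * Real.sqrt p := by
    rw [show (4:ℝ) * p = 2 ^ 2 * p by ring, Real.sqrt_mul (by positivity), Real.sqrt_sq (by norm_num)]
  linarith


instance : IsProbabilityMeasure (volume.restrict (Set.Ico (0:ℝ) 1)) :=
  ⟨by rw [Measure.restrict_apply_univ, Real.volume_Ico]; simp⟩

lemma restrict_Iic {t : ℝ} (h0 : 0 ≤ t) (h1 : t ≤ 1) :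
    (volume.restrict (Set.Ico (0:ℝ) 1)) (Set.Iic t) = ENNReal.ofReal t := by
  rw [Measure.restrict_apply measurableSet_Iic]
  apply le_antisymm
  · have h2 : volume (Set.Iic t ∩ Set.Ico 0 1) ≤ volume (Set.Icc 0 t) := by
      apply measure_mono; rintro x ⟨hx1, hx2, _⟩; exact ⟨hx2, hx1⟩
    rwa [Real.volume_Icc, sub_zero] at h2
  · have h2 : volume (Set.Ico 0 t) ≤ volume (Set.Iic t ∩ Set.Ico 0 1) := by
      apply measure_mono; rintro x ⟨hx1, hx2⟩
      exact ⟨le_of_lt hx2, hx1, lt_of_lt_of_le hx2 h1⟩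
    rwa [Real.volume_Ico, sub_zero] at h2

lemma restrict_Ioi {t : ℝ} (h0 : 0 ≤ t) (h1 : t ≤ 1) :
    (volume.restrict (Set.Ico (0:ℝ) 1)) (Set.Ioi t) = ENNReal.ofReal (1 - t) := by
  rw [Measure.restrict_apply measurableSet_Ioi]
  have : Set.Ioi t ∩ Set.Ico 0 1 = Set.Ioo t 1 := by
    ext x; constructor
    · rintro ⟨hx1, _, hx3⟩; exact ⟨hx1, hx3⟩
    · rintro ⟨hx1, hx2⟩; exact ⟨hx1, le_trans h0 (le_of_lt hx1), hx2⟩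
  rw [this, Real.volume_Ioo]

lemma unif01_fst_le {t : ℝ} (h0 : 0 ≤ t) (h1 : t ≤ 1) :
    unif01 {r : ℝ × ℝ | r.1 ≤ t} = ENNReal.ofReal t := by
  have : {r : ℝ × ℝ | r.1 ≤ t} = Set.Iic t ×ˢ Set.univ := by
    ext r; simp [Set.mem_prod]
  rw [unif01, this, Measure.prod_prod, restrict_Iic h0 h1, measure_univ, mul_one]

lemma unif01_rep {t u : ℝ} (h0 : 0 ≤ t) (h1 : t ≤ 1) (u0 : 0 ≤ u) (u1 : u ≤ 1) :
    unif01 {r : ℝ × ℝ | ¬ r.1 ≤ t ∧ r.2 ≤ u} = ENNReal.ofReal ((1 - t) * u) := by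
  have : {r : ℝ × ℝ | ¬ r.1 ≤ t ∧ r.2 ≤ u} = Set.Ioi t ×ˢ Set.Iic u := by
    ext r; simp only [Set.mem_setOf_eq, Set.mem_prod, Set.mem_Ioi, Set.mem_Iic, not_le]
  rw [unif01, this, Measure.prod_prod, restrict_Iic u0 u1, restrict_Ioi h0 h1,
    ← ENNReal.ofReal_mul (by linarith)]


def nni (l : List HashOp) : ℕ := l.countP (fun op => decide (op ≠ HashOp.ins))

lemma nni_nil : nni [] = 0 := rfl

lemma nni_cons_ins (l : List HashOp) : nni (HashOp.ins :: l) = nni l := by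
  simp [nni, List.countP_cons]

lemma nni_cons_rep (l : List HashOp) : nni (HashOp.rep :: l) = nni l + 1 := by
  simp [nni, List.countP_cons]

lemma nni_cons_mat (l : List HashOp) : nni (HashOp.mat :: l) = nni l + 1 := by
  simp [nni, List.countP_cons]

lemma transcriptAux_drop {α : Type} (pav prv : ℝ) (ρ : Option α × ℕ → ℝ × ℝ) :
    ∀ (k fuel : ℕ) (x : List (Option α)) (s : ℕ), k < fuel →
    nni ((transcriptAux pav prv ρ fuel x s).take k) < x.length →
    k < (transcriptAux pav prv ρ fuel x s).length ∧
    (transcriptAux pav prv ρ fuel x s).drop k =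
      transcriptAux pav prv ρ (fuel - k)
        (x.drop (nni ((transcriptAux pav prv ρ fuel x s).take k))) (s + k) := by
  intro k
  induction k with
  | zero =>
    intro fuel x s hkf h
    simp only [List.take_zero, nni_nil, List.drop_zero, Nat.sub_zero, Nat.add_zero] at *
    refine ⟨?_, trivial⟩
    obtain ⟨f, rfl⟩ : ∃ f, fuel = f + 1 := ⟨fuel - 1, by omega⟩
    obtain ⟨c, rest, rfl⟩ : ∃ c rest, x = c :: rest := by
      cases x with
      | nil => simp at h
      | cons c rest => exact ⟨c, rest, rfl⟩
    rw [transcriptAux]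
    split
    · simp
    · split <;> simp
  | succ m ih =>
    intro fuel x s hkf h
    obtain ⟨f, rfl⟩ : ∃ f, fuel = f + 1 := ⟨fuel - 1, by omega⟩
    cases x with
    | nil =>
      rw [transcriptAux] at h; simp [nni_nil] at h
    | cons c rest =>
      rw [transcriptAux] at h ⊢
      have harith : s + (m + 1) = s + 1 + m := by omega
      have harith2 : f + 1 - (m + 1) = f - m := by omega
      by_cases h1 : (ρ (c, s)).1 ≤ pav
      · rw [if_pos h1] at h ⊢
        rw [List.take_succ_cons, nni_cons_ins] at h ⊢
        obtain ⟨hlen, hdrop⟩ := ih f (c :: rest) (s + 1) (by omega) h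
        refine ⟨by simpa using Nat.succ_lt_succ hlen, ?_⟩
        rw [List.drop_succ_cons, hdrop, harith, harith2]
      · rw [if_neg h1] at h ⊢
        by_cases h2 : (ρ (c, s)).2 ≤ prv
        · rw [if_pos h2] at h ⊢
          rw [List.take_succ_cons, nni_cons_rep] at h ⊢
          have h' : nni ((transcriptAux pav prv ρ f rest (s+1)).take m) < rest.length := by
            simpa using h
          obtain ⟨hlen, hdrop⟩ := ih f rest (s + 1) (by omega) h'
          refine ⟨by simpa using Nat.succ_lt_succ hlen, ?_⟩
          rw [List.drop_succ_cons, hdrop, harith, harith2, List.drop_succ_cons]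
        · rw [if_neg h2] at h ⊢
          rw [List.take_succ_cons, nni_cons_mat] at h ⊢
          have h' : nni ((transcriptAux pav prv ρ f rest (s+1)).take m) < rest.length := by
            simpa using h
          obtain ⟨hlen, hdrop⟩ := ih f rest (s + 1) (by omega) h'
          refine ⟨by simpa using Nat.succ_lt_succ hlen, ?_⟩
          rw [List.drop_succ_cons, hdrop, harith, harith2, List.drop_succ_cons]

lemma transcriptAux_take_congr {α : Type} (pav prv : ℝ) (ρ ρ' : Option α × ℕ → ℝ × ℝ) :
    ∀ (fuel k : ℕ) (x : List (Option α)) (s : ℕ),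
    (∀ c j, s ≤ j → j < s + k → ρ (c, j) = ρ' (c, j)) →
    (transcriptAux pav prv ρ fuel x s).take k = (transcriptAux pav prv ρ' fuel x s).take k := by
  intro fuel
  induction fuel with
  | zero => intro k x s _; rfl
  | succ f ih =>
    intro k x s hagree
    cases x with
    | nil => rfl
    | cons c rest =>
      cases k with
      | zero => simp
      | succ m =>
        have hcs : ρ (c, s) = ρ' (c, s) := hagree c s le_rfl (by omega)
        rw [transcriptAux, transcriptAux, ← hcs]
        have hagree' : ∀ c j, s + 1 ≤ j → j < s + 1 + m → ρ (c, j) = ρ' (c, j) :=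
          fun c j hj1 hj2 => hagree c j (by omega) (by omega)
        split
        · rw [List.take_succ_cons, List.take_succ_cons, ih m (c :: rest) (s+1) hagree']
        · split <;>
            rw [List.take_succ_cons, List.take_succ_cons, ih m rest (s+1) hagree']


instance : Countable HashOp := by
  have : Function.Injective (fun op : HashOp => (match op with
      | HashOp.ins => 0 | HashOp.rep => 1 | HashOp.mat => 2 : ℕ)) := by
    intro a b h; cases a <;> cases b <;> simp_all
  exact ⟨_, this⟩

section Meas
variable {α : Type} [Fintype α] [DecidableEq α] (p : ℝ) (d n : ℕ)

lemma measurable_extApply (c : Option α) (s : ℕ) :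
    Measurable (fun ρ : Ufun α p d n => ext p d n ρ (c, s)) := by
  by_cases h : s < LN p d n
  · simp only [ext, h, dif_pos]
    exact measurable_pi_apply _
  · simp only [ext, h, dif_neg, not_false_iff]
    exact measurable_const

lemma measurableSet_fiber (pav prv : ℝ) :
    ∀ (fuel : ℕ) (x : List (Option α)) (s : ℕ) (t : List HashOp),
    MeasurableSet {ρ : Ufun α p d n | transcriptAux pav prv (ext p d n ρ) fuel x s = t} := by
  intro fuel
  induction fuel with
  | zero =>
    intro x s t
    cases t with
    | nil => simp only [transcriptAux]; exact MeasurableSet.univ.congr (by ext ρ; simp)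
    | cons o t' => convert MeasurableSet.empty using 1; ext ρ; simp [transcriptAux]
  | succ f ih =>
    intro x s t
    cases x with
    | nil =>
      cases t with
      | nil => exact MeasurableSet.univ.congr (by ext ρ; simp [transcriptAux])
      | cons o t' => convert MeasurableSet.empty using 1; ext ρ; simp [transcriptAux]
    | cons c rest =>
      have hmeas1 : MeasurableSet {ρ : Ufun α p d n | (ext p d n ρ (c, s)).1 ≤ pav} :=
        (measurable_fst.comp (measurable_extApply p d n c s)) measurableSet_Iic
      have hmeas2 : MeasurableSet {ρ : Ufun α p d n | (ext p d n ρ (c, s)).2 ≤ prv} :=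
        (measurable_snd.comp (measurable_extApply p d n c s)) measurableSet_Iic
      have hset : {ρ : Ufun α p d n | transcriptAux pav prv (ext p d n ρ) (f+1) (c::rest) s = t}
          = ({ρ | (ext p d n ρ (c, s)).1 ≤ pav} ∩
              {ρ | HashOp.ins :: transcriptAux pav prv (ext p d n ρ) f (c::rest) (s+1) = t}) ∪
            (({ρ | (ext p d n ρ (c, s)).1 ≤ pav}ᶜ ∩ {ρ | (ext p d n ρ (c, s)).2 ≤ prv}) ∩
              {ρ | HashOp.rep :: transcriptAux pav prv (ext p d n ρ) f rest (s+1) = t}) ∪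
            (({ρ | (ext p d n ρ (c, s)).1 ≤ pav}ᶜ ∩ {ρ | (ext p d n ρ (c, s)).2 ≤ prv}ᶜ) ∩
              {ρ | HashOp.mat :: transcriptAux pav prv (ext p d n ρ) f rest (s+1) = t}) := by
        ext ρ
        by_cases h1 : (ext p d n ρ (c, s)).1 ≤ pav <;>
          by_cases h2 : (ext p d n ρ (c, s)).2 ≤ prv <;>
          simp [transcriptAux, h1, h2]
      rw [hset]
      have hcons : ∀ (o : HashOp) (g : Ufun α p d n → List HashOp),
          (∀ t', MeasurableSet {ρ | g ρ = t'}) →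
          MeasurableSet {ρ : Ufun α p d n | o :: g ρ = t} := by
        intro o g hg
        cases t with
        | nil => convert MeasurableSet.empty using 1; ext ρ; simp
        | cons o' t' =>
          by_cases ho : o' = o
          · subst ho
            exact (hg t').congr (by ext ρ; simp)
          · convert MeasurableSet.empty using 1; ext ρ; simp [List.cons_eq_cons]
            intro h; exact absurd h.symm ho
      exact ((hmeas1.inter (hcons _ _ (ih (c::rest) (s+1)))).union
        (((hmeas1.compl.inter hmeas2)).inter (hcons _ _ (ih rest (s+1))))).union
        ((hmeas1.compl.inter hmeas2.compl).inter (hcons _ _ (ih rest (s+1))))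

lemma measurableSet_Q (x y : List (Option α)) (Q : List HashOp → List HashOp → Prop) :
    MeasurableSet {ρ : Ufun α p d n | Q (transcript p d n ρ x) (transcript p d n ρ y)} := by
  have : {ρ : Ufun α p d n | Q (transcript p d n ρ x) (transcript p d n ρ y)} =
      ⋃ tx : List HashOp, ⋃ ty : List HashOp,
        ({ρ | transcript p d n ρ x = tx} ∩ {ρ | transcript p d n ρ y = ty} ∩
          {ρ | Q tx ty}) := by
    ext ρ
    simp only [Set.mem_setOf_eq, Set.mem_iUnion, Set.mem_inter_iff]
    constructor
    · intro h; exact ⟨_, _, ⟨rfl, rfl⟩, h⟩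
    · rintro ⟨tx, ty, ⟨h1, h2⟩, h3⟩; rw [h1, h2]; exact h3
  rw [this]
  refine MeasurableSet.iUnion fun tx => MeasurableSet.iUnion fun ty => ?_
  refine MeasurableSet.inter (MeasurableSet.inter ?_ ?_) ?_
  · exact measurableSet_fiber p d n _ _ _ _ _ _
  · exact measurableSet_fiber p d n _ _ _ _ _ _
  · by_cases hq : Q tx ty
    · exact MeasurableSet.univ.congr (by ext ρ; simp [hq])
    · convert MeasurableSet.empty using 1; ext ρ; simp [hq]

end Meas

instance : IsProbabilityMeasure unif01 := by unfold unif01; infer_instance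

section Indep
variable {α : Type} [Fintype α] [DecidableEq α] (p : ℝ) (d n : ℕ)

instance : IsProbabilityMeasure (μU α p d n) := by
  unfold μU; infer_instance

lemma mu_eval_pair (a b : Option α × Fin (LN p d n)) (hab : a ≠ b)
    (B1 B2 : Set (ℝ × ℝ)) (hB1 : MeasurableSet B1) (hB2 : MeasurableSet B2) :
    μU α p d n {ρ | ρ a ∈ B1 ∧ ρ b ∈ B2} = unif01 B1 * unif01 B2 := by
  classical
  set s : Option α × Fin (LN p d n) → Set (ℝ × ℝ) :=
    fun i => if i = a then B1 else if i = b then B2 else Set.univ with hs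
  have hset : {ρ : Ufun α p d n | ρ a ∈ B1 ∧ ρ b ∈ B2} = Set.univ.pi s := by
    ext ρ
    simp only [Set.mem_setOf_eq, Set.mem_univ_pi, hs]
    constructor
    · rintro ⟨h1, h2⟩ i
      by_cases hia : i = a
      · subst hia; simp [h1]
      · by_cases hib : i = b
        · subst hib; simp [hia, h2]
        · simp [hia, hib]
    · intro h
      refine ⟨?_, ?_⟩
      · have := h a; simpa using this
      · have := h b; simpa [hab.symm] using this
  rw [hset, μU, Measure.pi_pi]
  have hprod : ∏ i : Option α × Fin (LN p d n), unif01 (s i) =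
      ∏ i ∈ ({a, b} : Finset (Option α × Fin (LN p d n))), unif01 (s i) := by
    symm
    apply Finset.prod_subset (Finset.subset_univ _)
    intro i _ hi
    simp only [Finset.mem_insert, Finset.mem_singleton, not_or] at hi
    simp only [hs, hi.1, hi.2, if_false]
    exact measure_univ
  rw [hprod, Finset.prod_pair hab]
  simp [hs, hab.symm]

lemma mu_indep_split (k : ℕ) (A : Set (Ufun α p d n)) (hA : MeasurableSet A)
    (hAdep : ∀ ρ ρ' : Ufun α p d n,
      (∀ i : Option α × Fin (LN p d n), (i.2 : ℕ) < k → ρ i = ρ' i) → (ρ ∈ A ↔ ρ' ∈ A))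
    (B : Set (Ufun α p d n))
    (a b : Option α × Fin (LN p d n)) (ha : ¬((a.2 : ℕ) < k)) (hb : ¬((b.2 : ℕ) < k))
    (B1 B2 : Set (ℝ × ℝ)) (hB1 : MeasurableSet B1) (hB2 : MeasurableSet B2)
    (hB : B = {ρ | ρ a ∈ B1 ∧ ρ b ∈ B2}) :
    μU α p d n (A ∩ B) = μU α p d n A * μU α p d n B := by
  classical
  set S : Option α × Fin (LN p d n) → Prop := fun i => (i.2 : ℕ) < k with hSdef
  haveI : DecidablePred S := fun i => Nat.decLt _ _
  set e := MeasurableEquiv.piEquivPiSubtypeProd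
    (fun _ : Option α × Fin (LN p d n) => ℝ × ℝ) S with he
  have hmp := measurePreserving_piEquivPiSubtypeProd
    (fun _ : Option α × Fin (LN p d n) => unif01) S
  set ν₁ := Measure.pi (fun _ : {i : Option α × Fin (LN p d n) // S i} => unif01) with hν₁
  set ν₂ := Measure.pi (fun _ : {i : Option α × Fin (LN p d n) // ¬ S i} => unif01) with hν₂
  haveI : IsProbabilityMeasure ν₁ := by rw [hν₁]; infer_instance
  haveI : IsProbabilityMeasure ν₂ := by rw [hν₂]; infer_instance
  set ext0 : ({i : Option α × Fin (LN p d n) // S i} → ℝ × ℝ) → Ufun α p d n :=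
    fun g i => if h : S i then g ⟨i, h⟩ else (0, 0) with hext0def
  have hext0 : Measurable ext0 := by
    apply measurable_pi_lambda
    intro i
    by_cases h : S i
    · simp only [hext0def, h, dif_pos]; exact measurable_pi_apply _
    · simp only [hext0def, h, dif_neg, not_false_iff]; exact measurable_const
  set A' : Set ({i : Option α × Fin (LN p d n) // S i} → ℝ × ℝ) := ext0 ⁻¹' A with hA'def
  have hA'meas : MeasurableSet A' := hext0 hA
  set B' : Set ({i : Option α × Fin (LN p d n) // ¬ S i} → ℝ × ℝ) :=
    {g | g ⟨a, ha⟩ ∈ B1 ∧ g ⟨b, hb⟩ ∈ B2} with hB'def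
  have hma : Measurable fun g : {i : Option α × Fin (LN p d n) // ¬ S i} → ℝ × ℝ =>
      g ⟨a, ha⟩ := measurable_pi_apply _
  have hmb : Measurable fun g : {i : Option α × Fin (LN p d n) // ¬ S i} → ℝ × ℝ =>
      g ⟨b, hb⟩ := measurable_pi_apply _
  have hB'meas : MeasurableSet B' := (hma hB1).inter (hmb hB2)
  have heapp : ∀ ρ : Ufun α p d n, e ρ =
      ((fun i : {i // S i} => ρ i.1), (fun i : {i // ¬ S i} => ρ i.1)) := fun ρ => rfl
  have hAeq : A = ⇑e ⁻¹' (A' ×ˢ Set.univ) := by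
    ext ρ
    simp only [Set.mem_preimage, heapp, Set.mem_prod, Set.mem_univ, and_true, hA'def,
      Set.mem_preimage]
    exact hAdep ρ (ext0 fun i : {i // S i} => ρ i.1)
      (fun i hik => by simp [hext0def, hSdef, hik])
  have hBeq : B = ⇑e ⁻¹' (Set.univ ×ˢ B') := by
    rw [hB]
    ext ρ
    simp only [Set.mem_preimage, heapp, Set.mem_prod, Set.mem_univ, true_and, hB'def,
      Set.mem_setOf_eq]
  have hABeq : A ∩ B = ⇑e ⁻¹' (A' ×ˢ B') := by
    rw [hAeq, hBeq, ← Set.preimage_inter, Set.prod_inter_prod, Set.univ_inter, Set.inter_univ]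
  have hμ : μU α p d n = Measure.pi (fun _ : Option α × Fin (LN p d n) => unif01) := rfl
  rw [hABeq, hAeq, hBeq, hμ]
  rw [hmp.measure_preimage (hA'meas.prod hB'meas).nullMeasurableSet,
    hmp.measure_preimage (hA'meas.prod MeasurableSet.univ).nullMeasurableSet,
    hmp.measure_preimage (MeasurableSet.univ.prod hB'meas).nullMeasurableSet]
  rw [Measure.prod_prod, Measure.prod_prod, Measure.prod_prod]
  simp [measure_univ]

end Indep

section Step
variable {α : Type} [Fintype α] [DecidableEq α] (p : ℝ) (d n : ℕ)

lemma idx_eq_nni (ρ : Ufun α p d n) (x : List (Option α)) (k : ℕ) :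
    idx p d n ρ x k = nni ((transcript p d n ρ x).take k) := rfl

/-- If the index is in range and `k < LN`, position `k` of the transcript exists and is
determined by `ρ` at `(x[idx], k)`. -/
lemma transcript_getD (ρ : Ufun α p d n) (x : List (Option α)) (k : ℕ)
    (hk : k < LN p d n) (hix : idx p d n ρ x k < x.length) :
    k < (transcript p d n ρ x).length ∧
    (transcript p d n ρ x).getD k HashOp.ins =
      (if (ρ (x[idx p d n ρ x k], ⟨k, hk⟩)).1 ≤ pa p then HashOp.ins
       else if (ρ (x[idx p d n ρ x k], ⟨k, hk⟩)).2 ≤ prr p then HashOp.rep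
       else HashOp.mat) := by
  have hix' : nni ((transcriptAux (pa p) (prr p) (ext p d n ρ) (LN p d n) x 0).take k)
      < x.length := hix
  obtain ⟨hlen, hdrop⟩ :=
    transcriptAux_drop (pa p) (prr p) (ext p d n ρ) k (LN p d n) x 0 hk hix'
  refine ⟨hlen, ?_⟩
  have hgd : (transcript p d n ρ x).getD k HashOp.ins
      = ((transcript p d n ρ x).drop k).head?.getD HashOp.ins := by
    rw [List.getD_eq_getElem?_getD, List.head?_drop]
  rw [hgd]
  have hxdrop : x.drop (idx p d n ρ x k) = x[idx p d n ρ x k] :: x.drop (idx p d n ρ x k + 1) :=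
    List.drop_eq_getElem_cons hix
  obtain ⟨m, hm⟩ : ∃ m, LN p d n - k = m + 1 := ⟨LN p d n - k - 1, by omega⟩
  have : (transcript p d n ρ x).drop k
      = transcriptAux (pa p) (prr p) (ext p d n ρ) (LN p d n - k)
          (x.drop (idx p d n ρ x k)) (0 + k) := hdrop
  rw [this, hxdrop, hm, Nat.zero_add, transcriptAux]
  have hext : ext p d n ρ (x[idx p d n ρ x k], k) = ρ (x[idx p d n ρ x k], ⟨k, hk⟩) := by
    simp [ext, hk]
  rw [hext]
  split
  · next h => exact (if_pos h).symm
  · split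
    · next h1 h2 => exact ((if_neg h1).trans (if_pos h2)).symm
    · next h1 h2 => exact ((if_neg h1).trans (if_neg h2)).symm

/-- The idx function only depends on coordinates with hash-position `< k`. -/
lemma idx_congr (ρ ρ' : Ufun α p d n) (x : List (Option α)) (k : ℕ)
    (hagree : ∀ i : Option α × Fin (LN p d n), (i.2 : ℕ) < k → ρ i = ρ' i) :
    idx p d n ρ x k = idx p d n ρ' x k := by
  rw [idx_eq_nni, idx_eq_nni, transcript, transcript,
    transcriptAux_take_congr (pa p) (prr p) (ext p d n ρ) (ext p d n ρ') (LN p d n) k x 0 ?_]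
  intro c j _ hj2
  rw [Nat.zero_add] at hj2
  by_cases hjL : j < LN p d n
  · simp only [ext, hjL, dif_pos]
    exact hagree (c, ⟨j, hjL⟩) hj2
  · simp [ext, hjL]

/-- The mapping from a pair of hash operations to a grid-walk character (mismatch case). -/
def gm : HashOp → HashOp → GOp
  | HashOp.rep, HashOp.rep => GOp.grep
  | HashOp.rep, HashOp.ins => GOp.gdel
  | HashOp.ins, HashOp.rep => GOp.gins
  | HashOp.ins, HashOp.ins => GOp.gloop
  | _, _ => GOp.gstop

lemma gridChar_eq_gm (ρ : Ufun α p d n) (x y : List (Option α)) (k : ℕ)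
    (hkx : k < (transcript p d n ρ x).length) (hky : k < (transcript p d n ρ y).length)
    (hne : x[idx p d n ρ x k]? ≠ y[idx p d n ρ y k]?) :
    gridChar p d n ρ x y k =
      gm ((transcript p d n ρ x).getD k HashOp.ins)
         ((transcript p d n ρ y).getD k HashOp.ins) := by
  rw [gridChar, if_pos (lt_min hkx hky), if_pos hne]
  rcases h1 : (transcript p d n ρ x).getD k HashOp.ins <;>
    rcases h2 : (transcript p d n ρ y).getD k HashOp.ins <;> rfl

end Step

section Key
variable {α : Type} [Fintype α] [DecidableEq α]

lemma mu_Dij_grid (p : ℝ) (d n : ℕ) (x y : List (Option α)) (k : ℕ) (hk : k < LN p d n)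
    (i j : ℕ) (hi : i < x.length) (hj : j < y.length) (hne : x[i]? ≠ y[j]?)
    (g : GOp) (P1 P2 : HashOp → Prop)
    (hgm : ∀ o1 o2, gm o1 o2 = g ↔ (P1 o1 ∧ P2 o2))
    (B1 B2 : Set (ℝ × ℝ)) (hB1 : MeasurableSet B1) (hB2 : MeasurableSet B2)
    (hP1 : ∀ r : ℝ × ℝ, P1 (if r.1 ≤ pa p then HashOp.ins
      else if r.2 ≤ prr p then HashOp.rep else HashOp.mat) ↔ r ∈ B1)
    (hP2 : ∀ r : ℝ × ℝ, P2 (if r.1 ≤ pa p then HashOp.ins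
      else if r.2 ≤ prr p then HashOp.rep else HashOp.mat) ↔ r ∈ B2) :
    μU α p d n ({ρ | idx p d n ρ x k = i ∧ idx p d n ρ y k = j} ∩
        {ρ | gridChar p d n ρ x y k = g}) =
      μU α p d n {ρ | idx p d n ρ x k = i ∧ idx p d n ρ y k = j} *
        (unif01 B1 * unif01 B2) ∧
    MeasurableSet ({ρ : Ufun α p d n | idx p d n ρ x k = i ∧ idx p d n ρ y k = j} ∩
        {ρ | gridChar p d n ρ x y k = g}) := by
  set a : Option α × Fin (LN p d n) := (x[i], ⟨k, hk⟩) with hadef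
  set b : Option α × Fin (LN p d n) := (y[j], ⟨k, hk⟩) with hbdef
  have hxy : x[i] ≠ y[j] := by
    rw [List.getElem?_eq_getElem hi, List.getElem?_eq_getElem hj] at hne
    intro hcon; exact hne (by rw [hcon])
  have hab : a ≠ b := by
    intro hcon
    exact hxy (congrArg Prod.fst hcon)
  have hDmeas : MeasurableSet {ρ : Ufun α p d n | idx p d n ρ x k = i ∧ idx p d n ρ y k = j} :=
    measurableSet_Q p d n x y (fun tx ty => nni (tx.take k) = i ∧ nni (ty.take k) = j)
  have hchar : ∀ ρ : Ufun α p d n, idx p d n ρ x k = i → idx p d n ρ y k = j →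
      (gridChar p d n ρ x y k = g ↔ (ρ a ∈ B1 ∧ ρ b ∈ B2)) := by
    intro ρ hix0 hiy0
    have hix : idx p d n ρ x k < x.length := by rw [hix0]; exact hi
    have hiy : idx p d n ρ y k < y.length := by rw [hiy0]; exact hj
    obtain ⟨hkx, hgdx⟩ := transcript_getD p d n ρ x k hk hix
    obtain ⟨hky, hgdy⟩ := transcript_getD p d n ρ y k hk hiy
    have hne' : x[idx p d n ρ x k]? ≠ y[idx p d n ρ y k]? := by
      rw [hix0, hiy0]; exact hne
    rw [gridChar_eq_gm p d n ρ x y k hkx hky hne', hgdx, hgdy, hgm]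
    simp only [hix0, hiy0]
    rw [hP1 (ρ a), hP2 (ρ b)]
  have hset : {ρ : Ufun α p d n | idx p d n ρ x k = i ∧ idx p d n ρ y k = j} ∩
      {ρ | gridChar p d n ρ x y k = g} =
      {ρ : Ufun α p d n | idx p d n ρ x k = i ∧ idx p d n ρ y k = j} ∩
      {ρ | ρ a ∈ B1 ∧ ρ b ∈ B2} := by
    ext ρ
    simp only [Set.mem_inter_iff, Set.mem_setOf_eq, and_congr_right_iff]
    intro hd
    exact hchar ρ hd.1 hd.2
  rw [hset]
  have hBmeas : MeasurableSet {ρ : Ufun α p d n | ρ a ∈ B1 ∧ ρ b ∈ B2} :=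
    ((measurable_pi_apply a) hB1).inter ((measurable_pi_apply b) hB2)
  refine ⟨?_, hDmeas.inter hBmeas⟩
  rw [mu_indep_split p d n k _ hDmeas ?_ _ a b (by simp [hadef]) (by simp [hbdef]) B1 B2 hB1 hB2 rfl,
    mu_eval_pair p d n a b hab B1 B2 hB1 hB2]
  intro ρ ρ' hagree
  simp only [Set.mem_setOf_eq]
  rw [idx_congr p d n ρ ρ' x k hagree, idx_congr p d n ρ ρ' y k hagree]

end Key

/-- conditional probabilities of the grid walk characters at any fixed
position `k < L`, given the event `E_k` that both scanning indices are in range and the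
current characters mismatch. -/
theorem stmt4 {α : Type} [Fintype α] [DecidableEq α]
    (p : ℝ) (hp0 : 0 < p) (hp : p ≤ 1 / 3) (n d : ℕ) (hn : 2 ≤ n) (hd : 1 ≤ d)
    (x y : List (Option α)) (hx : DollarTerminal x) (hy : DollarTerminal y)
    (k : ℕ) (hk : (k : ℝ) < Lreal p d n)
    (E : Set (Ufun α p d n))
    (hE : E = {ρ | idx p d n ρ x k < x.length ∧ idx p d n ρ y k < y.length ∧
      x[idx p d n ρ x k]? ≠ y[idx p d n ρ y k]?})
    (hpos : μU α p d n E ≠ 0) :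
    ProbabilityTheory.cond (μU α p d n) E {ρ | gridChar p d n ρ x y k = GOp.gloop} =
        ENNReal.ofReal (pa p ^ 2) ∧
    ProbabilityTheory.cond (μU α p d n) E {ρ | gridChar p d n ρ x y k = GOp.gdel} =
        ENNReal.ofReal (pa p * (1 - pa p) * prr p) ∧
    ProbabilityTheory.cond (μU α p d n) E {ρ | gridChar p d n ρ x y k = GOp.gins} =
        ENNReal.ofReal (pa p * (1 - pa p) * prr p) ∧
    ProbabilityTheory.cond (μU α p d n) E {ρ | gridChar p d n ρ x y k = GOp.grep} =
        ENNReal.ofReal ((1 - pa p) ^ 2 * prr p ^ 2) := by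

  classical
  have hkN : k < LN p d n := Nat.lt_ceil.mpr hk
  set F : Finset (ℕ × ℕ) := (Finset.range x.length ×ˢ Finset.range y.length).filter
    (fun ij => x[ij.1]? ≠ y[ij.2]?) with hF
  set D : ℕ × ℕ → Set (Ufun α p d n) :=
    fun ij => {ρ | idx p d n ρ x k = ij.1 ∧ idx p d n ρ y k = ij.2} with hD
  have hDmeas : ∀ ij : ℕ × ℕ, MeasurableSet (D ij) := fun ij =>
    measurableSet_Q p d n x y (fun tx ty => nni (tx.take k) = ij.1 ∧ nni (ty.take k) = ij.2)
  have hEunion : E = ⋃ ij ∈ F, D ij := by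
    rw [hE]; ext ρ
    simp only [Set.mem_setOf_eq, Set.mem_iUnion, hF, Finset.mem_filter, Finset.mem_product,
      Finset.mem_range, hD]
    constructor
    · rintro ⟨h1, h2, h3⟩
      exact ⟨(idx p d n ρ x k, idx p d n ρ y k), ⟨⟨h1, h2⟩, h3⟩, rfl, rfl⟩
    · rintro ⟨ij, ⟨⟨h1, h2⟩, h3⟩, h4, h5⟩
      refine ⟨h4 ▸ h1, h5 ▸ h2, ?_⟩
      rw [h4, h5]; exact h3
  have hdisj : (↑F : Set (ℕ × ℕ)).PairwiseDisjoint D := by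
    intro u _ v _ huv
    apply Set.disjoint_left.mpr
    rintro ρ ⟨hu1, hu2⟩ ⟨hv1, hv2⟩
    exact huv (Prod.ext (hu1 ▸ hv1) (hu2 ▸ hv2))
  have hEmeas : MeasurableSet E := by
    rw [hEunion]; exact F.measurableSet_biUnion (fun ij _ => hDmeas ij)
  have hEsum : μU α p d n E = ∑ ij ∈ F, μU α p d n (D ij) := by
    rw [hEunion]; exact measure_biUnion_finset hdisj (fun ij _ => hDmeas ij)
  have main : ∀ (g : GOp) (P1 P2 : HashOp → Prop),
      (∀ o1 o2, gm o1 o2 = g ↔ (P1 o1 ∧ P2 o2)) →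
      ∀ (B1 B2 : Set (ℝ × ℝ)), MeasurableSet B1 → MeasurableSet B2 →
      (∀ r : ℝ × ℝ, P1 (if r.1 ≤ pa p then HashOp.ins
        else if r.2 ≤ prr p then HashOp.rep else HashOp.mat) ↔ r ∈ B1) →
      (∀ r : ℝ × ℝ, P2 (if r.1 ≤ pa p then HashOp.ins
        else if r.2 ≤ prr p then HashOp.rep else HashOp.mat) ↔ r ∈ B2) →
      ProbabilityTheory.cond (μU α p d n) E {ρ | gridChar p d n ρ x y k = g} =
        unif01 B1 * unif01 B2 := by
    intro g P1 P2 hgm B1 B2 hB1 hB2 hP1 hP2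
    have hsplit : ∀ ij ∈ F,
        μU α p d n (D ij ∩ {ρ | gridChar p d n ρ x y k = g}) =
          μU α p d n (D ij) * (unif01 B1 * unif01 B2) ∧
        MeasurableSet (D ij ∩ {ρ | gridChar p d n ρ x y k = g}) := by
      intro ij hij
      simp only [hF, Finset.mem_filter, Finset.mem_product, Finset.mem_range] at hij
      exact mu_Dij_grid p d n x y k hkN ij.1 ij.2 hij.1.1 hij.1.2 hij.2 g P1 P2 hgm
        B1 B2 hB1 hB2 hP1 hP2
    have hEX : μU α p d n (E ∩ {ρ | gridChar p d n ρ x y k = g}) =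
        μU α p d n E * (unif01 B1 * unif01 B2) := by
      have hrw : E ∩ {ρ | gridChar p d n ρ x y k = g} =
          ⋃ ij ∈ F, (D ij ∩ {ρ | gridChar p d n ρ x y k = g}) := by
        rw [hEunion]
        ext ρ
        simp only [Set.mem_inter_iff, Set.mem_iUnion, Set.mem_setOf_eq]
        tauto
      rw [hrw, measure_biUnion_finset (hdisj.mono (fun ij => Set.inter_subset_left))
        (fun ij hij => (hsplit ij hij).2),
        Finset.sum_congr rfl (fun ij hij => (hsplit ij hij).1), ← Finset.sum_mul, ← hEsum]
    rw [ProbabilityTheory.cond_apply hEmeas, hEX, ← mul_assoc,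
      ENNReal.inv_mul_cancel hpos (measure_ne_top _ _), one_mul]
  have hpa0 := pa_nonneg p
  have hpa1 := (pa_lt_one hp0).le
  have hpr0 := (prr_pos hp0).le
  have hpr1 := prr_le_one hp0 hp
  set Bins : Set (ℝ × ℝ) := {r | r.1 ≤ pa p} with hBins
  set Brep : Set (ℝ × ℝ) := {r | ¬ r.1 ≤ pa p ∧ r.2 ≤ prr p} with hBrep
  have hBinsM : MeasurableSet Bins := measurable_fst measurableSet_Iic
  have hBrepM : MeasurableSet Brep :=
    ((measurable_fst measurableSet_Iic).compl).inter (measurable_snd measurableSet_Iic)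
  have huins : unif01 Bins = ENNReal.ofReal (pa p) := unif01_fst_le hpa0 hpa1
  have hurep : unif01 Brep = ENNReal.ofReal ((1 - pa p) * prr p) :=
    unif01_rep hpa0 hpa1 hpr0 hpr1
  have hPins : ∀ r : ℝ × ℝ, ((if r.1 ≤ pa p then HashOp.ins
      else if r.2 ≤ prr p then HashOp.rep else HashOp.mat) = HashOp.ins) ↔ r ∈ Bins := by
    intro r
    by_cases h1 : r.1 ≤ pa p
    · simp [h1, hBins]
    · by_cases h2 : r.2 ≤ prr p <;> simp [h1, h2, hBins]
  have hPrep : ∀ r : ℝ × ℝ, ((if r.1 ≤ pa p then HashOp.ins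
      else if r.2 ≤ prr p then HashOp.rep else HashOp.mat) = HashOp.rep) ↔ r ∈ Brep := by
    intro r
    by_cases h1 : r.1 ≤ pa p
    · simp [h1, hBrep]
    · by_cases h2 : r.2 ≤ prr p <;> simp [h1, h2, hBrep]
      exact lt_of_not_ge h1
  have h1mpa : (0:ℝ) ≤ 1 - pa p := by linarith
  refine ⟨?_, ?_, ?_, ?_⟩
  · rw [main GOp.gloop (fun o => o = HashOp.ins) (fun o => o = HashOp.ins) (by intro o1 o2; cases o1 <;> cases o2 <;> simp [gm])
      Bins Bins hBinsM hBinsM hPins hPins, huins, ← ENNReal.ofReal_mul hpa0, sq]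
  · rw [main GOp.gdel (fun o => o = HashOp.rep) (fun o => o = HashOp.ins) (by intro o1 o2; cases o1 <;> cases o2 <;> simp [gm])
      Brep Bins hBrepM hBinsM hPrep hPins, hurep, huins,
      ← ENNReal.ofReal_mul (mul_nonneg h1mpa hpr0)]
    congr 1; ring
  · rw [main GOp.gins (fun o => o = HashOp.ins) (fun o => o = HashOp.rep) (by intro o1 o2; cases o1 <;> cases o2 <;> simp [gm])
      Bins Brep hBinsM hBrepM hPins hPrep, hurep, huins,
      ← ENNReal.ofReal_mul hpa0]
    congr 1; ring
  · rw [main GOp.grep (fun o => o = HashOp.rep) (fun o => o = HashOp.rep) (by intro o1 o2; cases o1 <;> cases o2 <;> simp [gm])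
      Brep Brep hBrepM hBrepM hPrep hPrep, hurep,
      ← ENNReal.ofReal_mul (mul_nonneg h1mpa hpr0)]
    congr 1; ring


end EditLSH
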